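/- Assume ‖P_Ω P_T‖ ≤ 1/2 and λ ≤ 1/2, and suppose there exists a dual certificate W (P_T W = 0, ‖W‖ < 1/2, ‖P_Ω(UV* − λ·sgn(S₀) + W)‖_F ≤ λ/4, ‖P_{Ω⊥}(UV* + W)‖_∞ < λ/2). Let H = (H_L, H_S) be any pair with ‖X₀ + H‖_♦ ≤ ‖X₀‖_♦, where X₀ = (L₀, S₀). Write H^Γ = P_Γ(H) and H^{Γ⊥} = H − H^Γ, with components H^{Γ⊥}_L and H^{Γ⊥}_S. Then ‖P_{T⊥}(H^{Γ⊥}_L)‖_* + λ·‖P_{Ω⊥}(H^{Γ⊥}_S)‖_1 ≤ 4·‖H^Γ‖_♦. -/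

import Mathlib

open Matrix BigOperators

noncomputable def frobNorm {m k : ℕ} (A : Matrix (Fin m) (Fin k) ℝ) : ℝ :=
  Real.sqrt (∑ i, ∑ j, (A i j) ^ 2)

noncomputable def nuclearNorm {m k : ℕ} (A : Matrix (Fin m) (Fin k) ℝ) : ℝ :=
  ∑ i, Real.sqrt ((show (Aᵀ * A).IsHermitian by simpa using Matrix.isHermitian_conjTranspose_mul_self A).eigenvalues i)

def l1Norm {m k : ℕ} (A : Matrix (Fin m) (Fin k) ℝ) : ℝ :=
  ∑ i, ∑ j, |A i j|

noncomputable def linfNorm {m k : ℕ} (A : Matrix (Fin m) (Fin k) ℝ) : ℝ :=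
  ⨆ i, ⨆ j, |A i j|

noncomputable def specNorm {m k : ℕ} (A : Matrix (Fin m) (Fin k) ℝ) : ℝ :=
  ‖LinearMap.toContinuousLinearMap (Matrix.toEuclideanLin A)‖

def finner {m k : ℕ} (A B : Matrix (Fin m) (Fin k) ℝ) : ℝ :=
  ∑ i, ∑ j, A i j * B i j

noncomputable def projSet {n : ℕ} (Ω : Set (Fin n × Fin n)) (S : Matrix (Fin n) (Fin n) ℝ) :
    Matrix (Fin n) (Fin n) ℝ :=
  fun i j => Ω.indicator (fun p => S p.1 p.2) (i, j)

def suppSet {n : ℕ} (S : Matrix (Fin n) (Fin n) ℝ) : Set (Fin n × Fin n) :=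
  {p | S p.1 p.2 ≠ 0}

noncomputable def sgnMat {n : ℕ} (S : Matrix (Fin n) (Fin n) ℝ) : Matrix (Fin n) (Fin n) ℝ :=
  fun i j => Real.sign (S i j)

def Tspace {n r : ℕ} (U V : Matrix (Fin n) (Fin r) ℝ) : Set (Matrix (Fin n) (Fin n) ℝ) :=
  {X | ∃ Q R : Matrix (Fin n) (Fin r) ℝ, X = U * Qᵀ + R * Vᵀ}

def IsOrthProjOnto {n : ℕ} (P : Matrix (Fin n) (Fin n) ℝ →ₗ[ℝ] Matrix (Fin n) (Fin n) ℝ)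
    (T : Set (Matrix (Fin n) (Fin n) ℝ)) : Prop :=
  (∀ X, P X ∈ T) ∧ (∀ X ∈ T, P X = X) ∧ (∀ X Y, Y ∈ T → finner (X - P X) Y = 0)

noncomputable def pairFrob {n : ℕ} (X : Matrix (Fin n) (Fin n) ℝ × Matrix (Fin n) (Fin n) ℝ) : ℝ :=
  Real.sqrt (frobNorm X.1 ^ 2 + frobNorm X.2 ^ 2)

noncomputable def projGamma {n : ℕ} (X : Matrix (Fin n) (Fin n) ℝ × Matrix (Fin n) (Fin n) ℝ) :
    Matrix (Fin n) (Fin n) ℝ × Matrix (Fin n) (Fin n) ℝ :=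
  ((1/2 : ℝ) • (X.1 + X.2), (1/2 : ℝ) • (X.1 + X.2))

open scoped Classical

noncomputable def suppFinset {n : ℕ} (S : Matrix (Fin n) (Fin n) ℝ) : Finset (Fin n × Fin n) :=
  Finset.univ.filter (fun p => S p.1 p.2 ≠ 0)

namespace RPCA
variable {n : ℕ}

lemma finner_prod (A B : Matrix (Fin n) (Fin n) ℝ) :
    finner A B = ∑ p : Fin n × Fin n, A p.1 p.2 * B p.1 p.2 := by
  rw [finner, Fintype.sum_prod_type]

lemma frob_prod (A : Matrix (Fin n) (Fin n) ℝ) :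
    frobNorm A = Real.sqrt (∑ p : Fin n × Fin n, (A p.1 p.2) ^ 2) := by
  rw [frobNorm, Fintype.sum_prod_type]

lemma l1_prod (A : Matrix (Fin n) (Fin n) ℝ) :
    l1Norm A = ∑ p : Fin n × Fin n, |A p.1 p.2| := by
  rw [l1Norm, Fintype.sum_prod_type]

lemma finner_comm (A B : Matrix (Fin n) (Fin n) ℝ) : finner A B = finner B A := by
  simp [finner, mul_comm]

lemma finner_add_right (A B C : Matrix (Fin n) (Fin n) ℝ) :
    finner A (B + C) = finner A B + finner A C := by
  simp [finner, Matrix.add_apply, mul_add, Finset.sum_add_distrib]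

lemma finner_add_left (A B C : Matrix (Fin n) (Fin n) ℝ) :
    finner (A + B) C = finner A C + finner B C := by
  simp [finner, Matrix.add_apply, add_mul, Finset.sum_add_distrib]

lemma finner_neg_left (A B : Matrix (Fin n) (Fin n) ℝ) : finner (-A) B = - finner A B := by
  simp [finner, Matrix.neg_apply]

lemma finner_sub_right (A B C : Matrix (Fin n) (Fin n) ℝ) :
    finner A (B - C) = finner A B - finner A C := by
  simp [finner, Matrix.sub_apply, mul_sub, Finset.sum_sub_distrib]

lemma finner_self_nonneg (A : Matrix (Fin n) (Fin n) ℝ) : 0 ≤ finner A A := by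
  rw [finner_prod]
  exact Finset.sum_nonneg fun p _ => mul_self_nonneg _

lemma frobNorm_nonneg (A : Matrix (Fin n) (Fin n) ℝ) : 0 ≤ frobNorm A :=
  Real.sqrt_nonneg _

lemma frob_sq (A : Matrix (Fin n) (Fin n) ℝ) : frobNorm A ^ 2 = finner A A := by
  rw [frob_prod, Real.sq_sqrt (Finset.sum_nonneg fun p _ => sq_nonneg _), finner_prod]
  exact Finset.sum_congr rfl fun p _ => pow_two _

lemma finner_le_frob_mul (A B : Matrix (Fin n) (Fin n) ℝ) :
    finner A B ≤ frobNorm A * frobNorm B := by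
  rw [finner_prod, frob_prod, frob_prod]
  exact Real.sum_mul_le_sqrt_mul_sqrt _ _ _

lemma frob_triangle (A B : Matrix (Fin n) (Fin n) ℝ) :
    frobNorm (A + B) ≤ frobNorm A + frobNorm B := by
  have h1 : frobNorm (A + B) ^ 2 ≤ (frobNorm A + frobNorm B) ^ 2 := by
    rw [frob_sq, finner_add_left, finner_add_right, finner_add_right]
    have := finner_le_frob_mul A B
    have h2 := finner_le_frob_mul B A
    rw [finner_comm B A] at h2
    nlinarith [frob_sq A, frob_sq B, finner_comm B A]
  have h2 := Real.sqrt_le_sqrt h1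
  rwa [Real.sqrt_sq (frobNorm_nonneg _),
    Real.sqrt_sq (add_nonneg (frobNorm_nonneg A) (frobNorm_nonneg B))] at h2

lemma l1_nonneg (A : Matrix (Fin n) (Fin n) ℝ) : 0 ≤ l1Norm A := by
  rw [l1_prod]; exact Finset.sum_nonneg fun p _ => abs_nonneg _

lemma l1_neg (A : Matrix (Fin n) (Fin n) ℝ) : l1Norm (-A) = l1Norm A := by
  simp [l1Norm, Matrix.neg_apply]

lemma l1_triangle (A B : Matrix (Fin n) (Fin n) ℝ) :
    l1Norm (A + B) ≤ l1Norm A + l1Norm B := by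
  rw [l1_prod, l1_prod, l1_prod, ← Finset.sum_add_distrib]
  exact Finset.sum_le_sum fun p _ => abs_add_le _ _

lemma abs_entry_le_linf (A : Matrix (Fin n) (Fin n) ℝ) (i j : Fin n) :
    |A i j| ≤ linfNorm A := by
  have h1 : |A i j| ≤ ⨆ j', |A i j'| :=
    le_ciSup (f := fun j' => |A i j'|) (Set.Finite.bddAbove (Set.finite_range _)) j
  exact h1.trans
    (le_ciSup (f := fun i' => ⨆ j', |A i' j'|) (Set.Finite.bddAbove (Set.finite_range _)) i)

lemma linf_nonneg (A : Matrix (Fin n) (Fin n) ℝ) : 0 ≤ linfNorm A := by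
  rcases Nat.eq_zero_or_pos n with h | h
  · subst h
    rw [linfNorm]
    simp [Real.iSup_of_isEmpty]
  · exact (abs_nonneg _).trans (abs_entry_le_linf A ⟨0, h⟩ ⟨0, h⟩)

lemma frob_le_l1 (A : Matrix (Fin n) (Fin n) ℝ) : frobNorm A ≤ l1Norm A := by
  rw [frob_prod, l1_prod]
  rw [show ∑ p : Fin n × Fin n, (A p.1 p.2)^2 = ∑ p : Fin n × Fin n, |A p.1 p.2|^2 by
    exact Finset.sum_congr rfl fun p _ => (sq_abs _).symm]
  have h : ∑ p : Fin n × Fin n, |A p.1 p.2|^2 ≤ (∑ p : Fin n × Fin n, |A p.1 p.2|)^2 := by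
    calc ∑ p : Fin n × Fin n, |A p.1 p.2|^2
        = ∑ p : Fin n × Fin n, |A p.1 p.2| * |A p.1 p.2| :=
          Finset.sum_congr rfl fun p _ => pow_two _
      _ ≤ ∑ p : Fin n × Fin n, |A p.1 p.2| * (∑ q : Fin n × Fin n, |A q.1 q.2|) :=
          Finset.sum_le_sum fun p _ => mul_le_mul_of_nonneg_left
            (Finset.single_le_sum (f := fun q : Fin n × Fin n => |A q.1 q.2|) (fun q _ => abs_nonneg _) (Finset.mem_univ p)) (abs_nonneg _)
      _ = (∑ p : Fin n × Fin n, |A p.1 p.2|)^2 := by rw [← Finset.sum_mul, sq]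
  have h2 := Real.sqrt_le_sqrt h
  rwa [Real.sqrt_sq (Finset.sum_nonneg fun q _ => abs_nonneg _)] at h2


-- spec norm lemmas
lemma euc_norm_eq (y : Fin n → ℝ) :
    ‖(WithLp.equiv 2 (Fin n → ℝ)).symm y‖ = Real.sqrt (∑ a, y a ^ 2) := by
  rw [EuclideanSpace.norm_eq]
  congr 1
  exact Finset.sum_congr rfl fun a _ => by
    rw [show ((WithLp.equiv 2 (Fin n → ℝ)).symm y).ofLp a = y a from rfl, Real.norm_eq_abs, sq_abs]

lemma mulVec_norm_le_spec (A : Matrix (Fin n) (Fin n) ℝ) (x : Fin n → ℝ) :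
    Real.sqrt (∑ a, (A *ᵥ x) a ^ 2) ≤ specNorm A * Real.sqrt (∑ a, x a ^ 2) := by
  have h := (LinearMap.toContinuousLinearMap (Matrix.toEuclideanLin A)).le_opNorm
    ((WithLp.equiv 2 (Fin n → ℝ)).symm x)
  rw [show (LinearMap.toContinuousLinearMap (Matrix.toEuclideanLin A))
      ((WithLp.equiv 2 (Fin n → ℝ)).symm x) = (WithLp.equiv 2 (Fin n → ℝ)).symm (A *ᵥ x) from
    Matrix.toEuclideanLin_apply_piLp_toLp A x] at h
  rwa [euc_norm_eq, euc_norm_eq] at h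

lemma spec_le_of_bound {A : Matrix (Fin n) (Fin n) ℝ} {c : ℝ} (hc : 0 ≤ c)
    (h : ∀ x : Fin n → ℝ,
      Real.sqrt (∑ a, (A *ᵥ x) a ^ 2) ≤ c * Real.sqrt (∑ a, x a ^ 2)) :
    specNorm A ≤ c := by
  refine ContinuousLinearMap.opNorm_le_bound _ hc fun v => ?_
  have h2 := h ((WithLp.equiv 2 (Fin n → ℝ)) v)
  have e1 : (WithLp.equiv 2 (Fin n → ℝ)).symm ((WithLp.equiv 2 (Fin n → ℝ)) v) = v :=
    (WithLp.equiv 2 (Fin n → ℝ)).symm_apply_apply v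
  rw [← euc_norm_eq, ← euc_norm_eq, e1] at h2
  show ‖(WithLp.equiv 2 (Fin n → ℝ)).symm (A *ᵥ (WithLp.equiv 2 (Fin n → ℝ)) v)‖ ≤ c * ‖v‖
  exact h2

lemma spec_nonneg (A : Matrix (Fin n) (Fin n) ℝ) : 0 ≤ specNorm A := norm_nonneg _

lemma spec_neg (A : Matrix (Fin n) (Fin n) ℝ) : specNorm (-A) = specNorm A := by
  rw [specNorm, specNorm, map_neg, map_neg, norm_neg]

-- eigen machinery
noncomputable def rpcaEv (A : Matrix (Fin n) (Fin n) ℝ) : Fin n → ℝ :=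
  (show (Aᵀ * A).IsHermitian by simpa using Matrix.isHermitian_conjTranspose_mul_self A).eigenvalues

noncomputable def rpcaV (A : Matrix (Fin n) (Fin n) ℝ) (i : Fin n) : Fin n → ℝ :=
  ⇑((show (Aᵀ * A).IsHermitian by simpa using Matrix.isHermitian_conjTranspose_mul_self A).eigenvectorBasis i)

lemma nuclear_eq (A : Matrix (Fin n) (Fin n) ℝ) :
    nuclearNorm A = ∑ i, Real.sqrt (rpcaEv A i) := rfl

lemma ev_nonneg (A : Matrix (Fin n) (Fin n) ℝ) (i : Fin n) : 0 ≤ rpcaEv A i :=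
  (show (Aᵀ * A).PosSemidef by simpa using Matrix.posSemidef_conjTranspose_mul_self A).eigenvalues_nonneg i

lemma mulvec_G (A : Matrix (Fin n) (Fin n) ℝ) (i : Fin n) :
    (Aᵀ * A) *ᵥ rpcaV A i = rpcaEv A i • rpcaV A i := by
  exact (show (Aᵀ * A).IsHermitian by simpa using Matrix.isHermitian_conjTranspose_mul_self A).mulVec_eigenvectorBasis i

lemma v_ortho (A : Matrix (Fin n) (Fin n) ℝ) (i j : Fin n) :
    rpcaV A i ⬝ᵥ rpcaV A j = if i = j then 1 else 0 := by
  have h := (show (Aᵀ * A).IsHermitian by simpa using Matrix.isHermitian_conjTranspose_mul_self A).eigenvectorBasis.orthonormal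
  rw [orthonormal_iff_ite] at h
  have h2 := h i j
  rw [PiLp.inner_apply] at h2
  simpa [dotProduct, RCLike.inner_apply, mul_comm, rpcaV] using h2

lemma v_complete (A : Matrix (Fin n) (Fin n) ℝ) (a b : Fin n) :
    ∑ i, rpcaV A i a * rpcaV A i b = if a = b then 1 else 0 := by
  have hu := ((show (Aᵀ * A).IsHermitian by simpa using Matrix.isHermitian_conjTranspose_mul_self A).eigenvectorUnitary).2
  rw [Matrix.mem_unitaryGroup_iff] at hu
  have h2 := congrFun (congrFun hu a) b
  rw [Matrix.mul_apply, Matrix.one_apply] at h2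
  simpa [Matrix.star_apply, rpcaV] using h2


lemma dot_eq (x y : Fin n → ℝ) : x ⬝ᵥ y = ∑ a, x a * y a := rfl

lemma mulVec_apply' (A : Matrix (Fin n) (Fin n) ℝ) (x : Fin n → ℝ) (a : Fin n) :
    (A *ᵥ x) a = ∑ b, A a b * x b := rfl

lemma Av_dot (A : Matrix (Fin n) (Fin n) ℝ) (i j : Fin n) :
    (A *ᵥ rpcaV A i) ⬝ᵥ (A *ᵥ rpcaV A j) = if i = j then rpcaEv A j else 0 := by
  have h1 : (A *ᵥ rpcaV A i) ⬝ᵥ (A *ᵥ rpcaV A j)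
      = rpcaV A i ⬝ᵥ ((Aᵀ * A) *ᵥ rpcaV A j) := by
    conv_rhs => rw [Matrix.dotProduct_mulVec, ← Matrix.vecMul_vecMul,
      Matrix.vecMul_transpose, ← Matrix.dotProduct_mulVec]
  rw [h1, mulvec_G, dotProduct_smul, smul_eq_mul, v_ortho]
  by_cases h : i = j <;> simp [h]

lemma parseval (A : Matrix (Fin n) (Fin n) ℝ) (x : Fin n → ℝ) :
    ∑ i, (rpcaV A i ⬝ᵥ x) ^ 2 = ∑ a, x a ^ 2 := by
  calc ∑ i, (rpcaV A i ⬝ᵥ x) ^ 2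
      = ∑ i, ∑ a, ∑ b, (x a * x b) * (rpcaV A i a * rpcaV A i b) := by
        refine Finset.sum_congr rfl fun i _ => ?_
        rw [pow_two, dot_eq, Finset.sum_mul_sum]
        exact Finset.sum_congr rfl fun a _ => Finset.sum_congr rfl fun b _ => by ring
    _ = ∑ a, ∑ i, ∑ b, (x a * x b) * (rpcaV A i a * rpcaV A i b) := Finset.sum_comm
    _ = ∑ a, ∑ b, ∑ i, (x a * x b) * (rpcaV A i a * rpcaV A i b) :=
        Finset.sum_congr rfl fun a _ => Finset.sum_comm
    _ = ∑ a, ∑ b, (x a * x b) * (if a = b then 1 else 0) := by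
        refine Finset.sum_congr rfl fun a _ => Finset.sum_congr rfl fun b _ => ?_
        rw [← Finset.mul_sum, v_complete]
    _ = ∑ a, x a ^ 2 := by
        refine Finset.sum_congr rfl fun a _ => ?_
        simp [Finset.sum_ite_eq, pow_two]

lemma G_apply (A : Matrix (Fin n) (Fin n) ℝ) (c b : Fin n) :
    (Aᵀ * A) c b = ∑ i, rpcaEv A i * (rpcaV A i c * rpcaV A i b) := by
  have h : ∀ i, ∑ e, (Aᵀ * A) c e * rpcaV A i e = rpcaEv A i * rpcaV A i c := by
    intro i
    have h2 := congrFun (mulvec_G A i) c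
    rw [mulVec_apply'] at h2
    rw [h2, Pi.smul_apply, smul_eq_mul]
  calc (Aᵀ * A) c b = ∑ e, (Aᵀ * A) c e * (if e = b then 1 else 0) := by
        simp [Finset.sum_ite_eq]
    _ = ∑ e, (Aᵀ * A) c e * (∑ i, rpcaV A i e * rpcaV A i b) := by
        refine Finset.sum_congr rfl fun e _ => ?_
        rw [v_complete]
    _ = ∑ e, ∑ i, ((Aᵀ * A) c e * rpcaV A i e) * rpcaV A i b := by
        refine Finset.sum_congr rfl fun e _ => ?_
        rw [Finset.mul_sum]
        exact Finset.sum_congr rfl fun i _ => by ring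
    _ = ∑ i, ∑ e, ((Aᵀ * A) c e * rpcaV A i e) * rpcaV A i b := Finset.sum_comm
    _ = ∑ i, rpcaEv A i * (rpcaV A i c * rpcaV A i b) := by
        refine Finset.sum_congr rfl fun i _ => ?_
        rw [← Finset.sum_mul, h i, mul_assoc]

lemma finner_mul (A B C : Matrix (Fin n) (Fin n) ℝ) :
    finner (A * B) C = finner B (Aᵀ * C) := by
  calc finner (A * B) C = ∑ a, ∑ b, ∑ c, A a c * B c b * C a b := by
        refine Finset.sum_congr rfl fun a _ => Finset.sum_congr rfl fun b _ => ?_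
        rw [Matrix.mul_apply, Finset.sum_mul]
    _ = ∑ a, ∑ c, ∑ b, A a c * B c b * C a b :=
        Finset.sum_congr rfl fun a _ => Finset.sum_comm
    _ = ∑ c, ∑ a, ∑ b, A a c * B c b * C a b := Finset.sum_comm
    _ = ∑ c, ∑ b, ∑ a, A a c * B c b * C a b :=
        Finset.sum_congr rfl fun c _ => Finset.sum_comm
    _ = finner B (Aᵀ * C) := by
        refine Finset.sum_congr rfl fun c _ => Finset.sum_congr rfl fun b _ => ?_
        rw [Matrix.mul_apply, Finset.mul_sum]
        exact Finset.sum_congr rfl fun a _ => by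
          rw [Matrix.transpose_apply]; ring

lemma sum_outer (A : Matrix (Fin n) (Fin n) ℝ) (w w' : Fin n → ℝ) :
    finner (Matrix.of fun a b => ∑ i, w i * (rpcaV A i a * rpcaV A i b))
           (Matrix.of fun a b => ∑ j, w' j * (rpcaV A j a * rpcaV A j b)) = ∑ i, w i * w' i := by
  calc finner (Matrix.of fun a b => ∑ i, w i * (rpcaV A i a * rpcaV A i b))
           (Matrix.of fun a b => ∑ j, w' j * (rpcaV A j a * rpcaV A j b))
      = ∑ a, ∑ b, ∑ i, ∑ j, (w i * w' j) *
          ((rpcaV A i a * rpcaV A j a) * (rpcaV A i b * rpcaV A j b)) := by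
        refine Finset.sum_congr rfl fun a _ => Finset.sum_congr rfl fun b _ => ?_
        show (∑ i, w i * (rpcaV A i a * rpcaV A i b)) * (∑ j, w' j * (rpcaV A j a * rpcaV A j b))
          = _
        rw [Finset.sum_mul_sum]
        exact Finset.sum_congr rfl fun i _ => Finset.sum_congr rfl fun j _ => by ring
    _ = ∑ a, ∑ i, ∑ b, ∑ j, (w i * w' j) *
          ((rpcaV A i a * rpcaV A j a) * (rpcaV A i b * rpcaV A j b)) :=
        Finset.sum_congr rfl fun a _ => Finset.sum_comm
    _ = ∑ i, ∑ a, ∑ b, ∑ j, (w i * w' j) *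
          ((rpcaV A i a * rpcaV A j a) * (rpcaV A i b * rpcaV A j b)) := Finset.sum_comm
    _ = ∑ i, ∑ a, ∑ j, ∑ b, (w i * w' j) *
          ((rpcaV A i a * rpcaV A j a) * (rpcaV A i b * rpcaV A j b)) :=
        Finset.sum_congr rfl fun i _ => Finset.sum_congr rfl fun a _ => Finset.sum_comm
    _ = ∑ i, ∑ j, ∑ a, ∑ b, (w i * w' j) *
          ((rpcaV A i a * rpcaV A j a) * (rpcaV A i b * rpcaV A j b)) :=
        Finset.sum_congr rfl fun i _ => Finset.sum_comm
    _ = ∑ i, ∑ j, (w i * w' j) * ((rpcaV A i ⬝ᵥ rpcaV A j) * (rpcaV A i ⬝ᵥ rpcaV A j)) := by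
        refine Finset.sum_congr rfl fun i _ => Finset.sum_congr rfl fun j _ => ?_
        rw [dot_eq, Finset.sum_mul_sum, Finset.mul_sum]
        refine Finset.sum_congr rfl fun a _ => ?_
        rw [Finset.mul_sum]
    _ = ∑ i, w i * w' i := by
        refine Finset.sum_congr rfl fun i _ => ?_
        rw [Finset.sum_eq_single i ?_ ?_]
        · rw [v_ortho, if_pos rfl]; ring
        · intro j _ hj
          rw [v_ortho, if_neg (Ne.symm hj)]; ring
        · intro h; exact absurd (Finset.mem_univ i) h


lemma sq_sum_dot (z : Fin n → ℝ) : ∑ a, z a ^ 2 = z ⬝ᵥ z := by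
  rw [dot_eq]; exact Finset.sum_congr rfl fun a _ => pow_two _

lemma sum_dot (f : Fin n → Fin n → ℝ) (y : Fin n → ℝ) :
    (∑ i, f i) ⬝ᵥ y = ∑ i, f i ⬝ᵥ y := by
  rw [dot_eq]
  calc ∑ a, (∑ i, f i) a * y a = ∑ a, ∑ i, f i a * y a := by
        refine Finset.sum_congr rfl fun a _ => ?_
        rw [Finset.sum_apply, Finset.sum_mul]
    _ = ∑ i, ∑ a, f i a * y a := Finset.sum_comm
    _ = ∑ i, f i ⬝ᵥ y := rfl

lemma dot_sum (x : Fin n → ℝ) (f : Fin n → Fin n → ℝ) :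
    x ⬝ᵥ (∑ i, f i) = ∑ i, x ⬝ᵥ f i := by
  rw [dotProduct_comm, sum_dot]
  exact Finset.sum_congr rfl fun i _ => dotProduct_comm _ _

lemma dual_exists (A : Matrix (Fin n) (Fin n) ℝ) :
    ∃ Z : Matrix (Fin n) (Fin n) ℝ,
      finner Z A = nuclearNorm A ∧
      (∀ x : Fin n → ℝ, ∑ a, (Z *ᵥ x) a ^ 2 ≤ ∑ a, x a ^ 2) ∧
      (∀ u : Fin n → ℝ, u ᵥ* A = 0 → u ᵥ* Z = 0) ∧
      (∀ y : Fin n → ℝ, A *ᵥ y = 0 → Z *ᵥ y = 0) := by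
  classical
  set c : Fin n → ℝ := fun i => if rpcaEv A i = 0 then 0 else (Real.sqrt (rpcaEv A i))⁻¹ with hc
  set B : Matrix (Fin n) (Fin n) ℝ :=
    Matrix.of (fun a b => ∑ i, c i * (rpcaV A i a * rpcaV A i b)) with hB
  have hBapp : ∀ a b, B a b = ∑ i, c i * (rpcaV A i a * rpcaV A i b) := fun a b => rfl
  have hBv : ∀ y : Fin n → ℝ,
      B *ᵥ y = fun a => ∑ i, (c i * (rpcaV A i ⬝ᵥ y)) * rpcaV A i a := by
    intro y; funext a
    show ∑ b, B a b * y b = _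
    calc ∑ b, B a b * y b
        = ∑ b, ∑ i, (c i * rpcaV A i a) * (rpcaV A i b * y b) := by
          refine Finset.sum_congr rfl fun b _ => ?_
          rw [hBapp, Finset.sum_mul]
          exact Finset.sum_congr rfl fun i _ => by ring
      _ = ∑ i, ∑ b, (c i * rpcaV A i a) * (rpcaV A i b * y b) := Finset.sum_comm
      _ = ∑ i, (c i * (rpcaV A i ⬝ᵥ y)) * rpcaV A i a := by
          refine Finset.sum_congr rfl fun i _ => ?_
          rw [← Finset.mul_sum, dot_eq]
          ring
  refine ⟨A * B, ?_, ?_, ?_, ?_⟩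
  · rw [finner_mul]
    have hG : Aᵀ * A = Matrix.of (fun a b => ∑ j, rpcaEv A j * (rpcaV A j a * rpcaV A j b)) := by
      ext a b; exact G_apply A a b
    rw [hG, hB, sum_outer, nuclear_eq]
    refine Finset.sum_congr rfl fun i _ => ?_
    by_cases h : rpcaEv A i = 0
    · simp [hc, h]
    · have hpos : 0 < rpcaEv A i := lt_of_le_of_ne (ev_nonneg A i) (Ne.symm h)
      have hs : Real.sqrt (rpcaEv A i) ≠ 0 := ne_of_gt (Real.sqrt_pos.mpr hpos)
      have hms : Real.sqrt (rpcaEv A i) * Real.sqrt (rpcaEv A i) = rpcaEv A i :=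
        Real.mul_self_sqrt (ev_nonneg A i)
      simp only [hc]
      rw [if_neg h]
      field_simp
      rw [Real.sq_sqrt (ev_nonneg A i)]
  · intro x
    set d : Fin n → ℝ := fun i => c i * (rpcaV A i ⬝ᵥ x) with hd
    have hBx : B *ᵥ x = ∑ i, d i • rpcaV A i := by
      rw [hBv]; funext a
      rw [Finset.sum_apply]
      exact Finset.sum_congr rfl fun i _ => rfl
    have hABx : (A * B) *ᵥ x = ∑ i, d i • (A *ᵥ rpcaV A i) := by
      rw [← Matrix.mulVec_mulVec, hBx, ← Matrix.mulVecLin_apply, map_sum]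
      exact Finset.sum_congr rfl fun i _ => by
        rw [LinearMap.map_smul, Matrix.mulVecLin_apply]
    have h1 : ∑ a, ((A * B) *ᵥ x) a ^ 2 = ∑ i, d i ^ 2 * rpcaEv A i := by
      rw [sq_sum_dot, hABx, sum_dot]
      refine Finset.sum_congr rfl fun i _ => ?_
      rw [smul_dotProduct, dot_sum]
      rw [Finset.sum_eq_single i ?_ ?_]
      · rw [dotProduct_smul, Av_dot, if_pos rfl]
        simp [smul_eq_mul]; ring
      · intro j _ hj
        rw [dotProduct_smul, Av_dot, if_neg (Ne.symm hj)]
        simp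
      · intro h; exact absurd (Finset.mem_univ i) h
    rw [h1, ← parseval A x]
    refine Finset.sum_le_sum fun i _ => ?_
    by_cases h : rpcaEv A i = 0
    · rw [hd]
      simp only [hc, if_pos h]
      simp [h]
      positivity
    · have hms : Real.sqrt (rpcaEv A i) * Real.sqrt (rpcaEv A i) = rpcaEv A i :=
        Real.mul_self_sqrt (ev_nonneg A i)
      have hs : Real.sqrt (rpcaEv A i) ≠ 0 := by
        intro h0
        exact h (by rw [← hms, h0, mul_zero])
      have hdi : d i = (Real.sqrt (rpcaEv A i))⁻¹ * (rpcaV A i ⬝ᵥ x) := by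
        simp only [hd, hc]
        rw [if_neg h]
      have : d i ^ 2 * rpcaEv A i = (rpcaV A i ⬝ᵥ x) ^ 2 := by
        rw [hdi, mul_pow, ← hms]
        field_simp
        rw [Real.sqrt_sq (Real.sqrt_nonneg _)]
      rw [this]
  · intro u hu
    rw [← Matrix.vecMul_vecMul, hu, Matrix.zero_vecMul]
  · intro y hy
    have hv0 : ∀ i, rpcaEv A i ≠ 0 → rpcaV A i ⬝ᵥ y = 0 := by
      intro i hi
      have h1 : (rpcaEv A i • rpcaV A i) ⬝ᵥ y = 0 := by
        rw [← mulvec_G, ← Matrix.mulVec_mulVec, Matrix.mulVec_transpose,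
          ← Matrix.dotProduct_mulVec, hy, dotProduct_zero]
      rw [smul_dotProduct, smul_eq_mul] at h1
      exact (mul_eq_zero.mp h1).resolve_left hi
    have hBy : B *ᵥ y = 0 := by
      rw [hBv]; funext a
      show (∑ i, (c i * (rpcaV A i ⬝ᵥ y)) * rpcaV A i a) = 0
      refine Finset.sum_eq_zero fun i _ => ?_
      by_cases h : rpcaEv A i = 0
      · simp only [hc, if_pos h]; ring
      · rw [hv0 i h]; ring
    rw [← Matrix.mulVec_mulVec, hBy, Matrix.mulVec_zero]


lemma nuclear_nonneg (A : Matrix (Fin n) (Fin n) ℝ) : 0 ≤ nuclearNorm A := by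
  rw [nuclear_eq]
  exact Finset.sum_nonneg fun i _ => Real.sqrt_nonneg _

lemma finner_le_spec_mul_nuclear (Z A : Matrix (Fin n) (Fin n) ℝ) :
    finner Z A ≤ specNorm Z * nuclearNorm A := by
  have hexp : finner Z A = ∑ i, (Z *ᵥ rpcaV A i) ⬝ᵥ (A *ᵥ rpcaV A i) := by
    calc finner Z A = ∑ a, ∑ b, ∑ e, Z a b * A a e * (if b = e then 1 else 0) := by
          refine Finset.sum_congr rfl fun a _ => Finset.sum_congr rfl fun b _ => ?_
          rw [Finset.sum_eq_single b ?_ ?_]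
          · rw [if_pos rfl, mul_one]
          · intro e _ he; rw [if_neg (Ne.symm he), mul_zero]
          · intro hmem; exact absurd (Finset.mem_univ b) hmem
      _ = ∑ a, ∑ b, ∑ e, ∑ i, (Z a b * rpcaV A i b) * (A a e * rpcaV A i e) := by
          refine Finset.sum_congr rfl fun a _ => Finset.sum_congr rfl fun b _ =>
            Finset.sum_congr rfl fun e _ => ?_
          rw [← v_complete A b e, Finset.mul_sum]
          exact Finset.sum_congr rfl fun i _ => by ring
      _ = ∑ a, ∑ b, ∑ i, ∑ e, (Z a b * rpcaV A i b) * (A a e * rpcaV A i e) :=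
          Finset.sum_congr rfl fun a _ => Finset.sum_congr rfl fun b _ => Finset.sum_comm
      _ = ∑ a, ∑ i, ∑ b, ∑ e, (Z a b * rpcaV A i b) * (A a e * rpcaV A i e) :=
          Finset.sum_congr rfl fun a _ => Finset.sum_comm
      _ = ∑ i, ∑ a, ∑ b, ∑ e, (Z a b * rpcaV A i b) * (A a e * rpcaV A i e) := Finset.sum_comm
      _ = ∑ i, (Z *ᵥ rpcaV A i) ⬝ᵥ (A *ᵥ rpcaV A i) := by
          refine Finset.sum_congr rfl fun i _ => ?_
          rw [dot_eq]
          refine Finset.sum_congr rfl fun a _ => ?_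
          rw [mulVec_apply', mulVec_apply', Finset.sum_mul_sum]
  rw [hexp, nuclear_eq, Finset.mul_sum]
  refine Finset.sum_le_sum fun i _ => ?_
  have hv1 : ∑ a, rpcaV A i a ^ 2 = 1 := by
    rw [sq_sum_dot, v_ortho, if_pos rfl]
  have hAv : ∑ a, (A *ᵥ rpcaV A i) a ^ 2 = rpcaEv A i := by
    rw [sq_sum_dot, Av_dot, if_pos rfl]
  have hcs : (Z *ᵥ rpcaV A i) ⬝ᵥ (A *ᵥ rpcaV A i)
      ≤ Real.sqrt (∑ a, (Z *ᵥ rpcaV A i) a ^ 2) * Real.sqrt (∑ a, (A *ᵥ rpcaV A i) a ^ 2) := by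
    rw [dot_eq]
    exact Real.sum_mul_le_sqrt_mul_sqrt _ _ _
  have hZb : Real.sqrt (∑ a, (Z *ᵥ rpcaV A i) a ^ 2) ≤ specNorm Z := by
    have := mulVec_norm_le_spec Z (rpcaV A i)
    rwa [hv1, Real.sqrt_one, mul_one] at this
  rw [hAv] at hcs
  have h2 : Real.sqrt (∑ a, (Z *ᵥ rpcaV A i) a ^ 2) * Real.sqrt (rpcaEv A i)
      ≤ specNorm Z * Real.sqrt (rpcaEv A i) :=
    mul_le_mul_of_nonneg_right hZb (Real.sqrt_nonneg _)
  linarith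

lemma spec_le_one_of_sq (Z : Matrix (Fin n) (Fin n) ℝ)
    (h : ∀ x : Fin n → ℝ, ∑ a, (Z *ᵥ x) a ^ 2 ≤ ∑ a, x a ^ 2) : specNorm Z ≤ 1 := by
  refine spec_le_of_bound zero_le_one fun x => ?_
  rw [one_mul]
  exact Real.sqrt_le_sqrt (h x)

lemma finner_le_nuclear (Z A : Matrix (Fin n) (Fin n) ℝ) (hZ : specNorm Z ≤ 1) :
    finner Z A ≤ nuclearNorm A := by
  have := finner_le_spec_mul_nuclear Z A
  have h2 : specNorm Z * nuclearNorm A ≤ 1 * nuclearNorm A :=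
    mul_le_mul_of_nonneg_right hZ (nuclear_nonneg A)
  linarith

lemma nuclear_triangle (A B : Matrix (Fin n) (Fin n) ℝ) :
    nuclearNorm (A + B) ≤ nuclearNorm A + nuclearNorm B := by
  obtain ⟨Z, hZ1, hZ2, -, -⟩ := dual_exists (A + B)
  have hs := spec_le_one_of_sq Z hZ2
  have h1 := finner_le_nuclear Z A hs
  have h2 := finner_le_nuclear Z B hs
  rw [← hZ1, finner_add_right]
  linarith

lemma nuclear_congr {A B : Matrix (Fin n) (Fin n) ℝ} (h : Aᴴ * A = Bᴴ * B) :
    nuclearNorm A = nuclearNorm B := by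
  have key : ∀ (C D : Matrix (Fin n) (Fin n) ℝ), C = D →
      ∀ (hC : C.IsHermitian) (hD : D.IsHermitian),
      (∑ i, Real.sqrt (hC.eigenvalues i)) = ∑ i, Real.sqrt (hD.eigenvalues i) := by
    rintro C D rfl hC hD; rfl
  exact key _ _ (by simpa using h) _ _

lemma nuclear_neg (A : Matrix (Fin n) (Fin n) ℝ) : nuclearNorm (-A) = nuclearNorm A :=
  nuclear_congr (by simp)

lemma nuclear_sub_le (A B : Matrix (Fin n) (Fin n) ℝ) :
    nuclearNorm (A - B) ≤ nuclearNorm A + nuclearNorm B := by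
  have := nuclear_triangle A (-B)
  rwa [nuclear_neg, ← sub_eq_add_neg] at this

lemma spec_le_frob (A : Matrix (Fin n) (Fin n) ℝ) : specNorm A ≤ frobNorm A := by
  refine spec_le_of_bound (frobNorm_nonneg A) fun x => ?_
  have hcs : ∑ a, (A *ᵥ x) a ^ 2 ≤ (∑ a, ∑ b, A a b ^ 2) * (∑ b, x b ^ 2) := by
    rw [Finset.sum_mul]
    refine Finset.sum_le_sum fun a _ => ?_
    rw [mulVec_apply']
    exact Finset.sum_mul_sq_le_sq_mul_sq Finset.univ (fun b => A a b) x
  have h2 := Real.sqrt_le_sqrt hcs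
  rwa [Real.sqrt_mul (Finset.sum_nonneg fun a _ =>
    Finset.sum_nonneg fun b _ => sq_nonneg _ : (0:ℝ) ≤ ∑ a, ∑ b, A a b ^ 2)] at h2

lemma frob_le_nuclear (A : Matrix (Fin n) (Fin n) ℝ) : frobNorm A ≤ nuclearNorm A := by
  rcases eq_or_lt_of_le (frobNorm_nonneg A) with h | h
  · rw [← h]; exact nuclear_nonneg A
  · have h1 : frobNorm A ^ 2 ≤ frobNorm A * nuclearNorm A := by
      rw [frob_sq]
      calc finner A A ≤ specNorm A * nuclearNorm A := finner_le_spec_mul_nuclear A A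
        _ ≤ frobNorm A * nuclearNorm A :=
            mul_le_mul_of_nonneg_right (spec_le_frob A) (nuclear_nonneg A)
    nlinarith


lemma finner_smul_left (c : ℝ) (X Y : Matrix (Fin n) (Fin n) ℝ) :
    finner (c • X) Y = c * finner X Y := by
  simp [finner, Matrix.smul_apply, smul_eq_mul, Finset.mul_sum, mul_assoc]

lemma finner_sub_left (A B C : Matrix (Fin n) (Fin n) ℝ) :
    finner (A - B) C = finner A C - finner B C := by
  simp [finner, Matrix.sub_apply, sub_mul, Finset.sum_sub_distrib]

lemma frob_neg (A : Matrix (Fin n) (Fin n) ℝ) : frobNorm (-A) = frobNorm A := by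
  simp [frobNorm, Matrix.neg_apply]

lemma linf_neg (A : Matrix (Fin n) (Fin n) ℝ) : linfNorm (-A) = linfNorm A := by
  simp [linfNorm, Matrix.neg_apply]

lemma proj_apply (Ω : Set (Fin n × Fin n)) (X : Matrix (Fin n) (Fin n) ℝ) (i j : Fin n) :
    projSet Ω X i j = if (i, j) ∈ Ω then X i j else 0 := by
  rw [projSet, Set.indicator_apply]

lemma projc_apply (Ω : Set (Fin n × Fin n)) (X : Matrix (Fin n) (Fin n) ℝ) (i j : Fin n) :
    (X - projSet Ω X) i j = if (i, j) ∈ Ω then 0 else X i j := by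
  rw [Matrix.sub_apply, proj_apply]
  split <;> simp

lemma proj_add (Ω : Set (Fin n × Fin n)) (X Y : Matrix (Fin n) (Fin n) ℝ) :
    projSet Ω (X + Y) = projSet Ω X + projSet Ω Y := by
  ext i j
  rw [Matrix.add_apply, proj_apply, proj_apply, proj_apply, Matrix.add_apply]
  split <;> simp

lemma proj_neg (Ω : Set (Fin n × Fin n)) (X : Matrix (Fin n) (Fin n) ℝ) :
    projSet Ω (-X) = - projSet Ω X := by
  ext i j
  rw [Matrix.neg_apply, proj_apply, proj_apply, Matrix.neg_apply]
  split <;> simp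

lemma frob_proj_le (Ω : Set (Fin n × Fin n)) (X : Matrix (Fin n) (Fin n) ℝ) :
    frobNorm (projSet Ω X) ≤ frobNorm X := by
  rw [frobNorm, frobNorm]
  apply Real.sqrt_le_sqrt
  refine Finset.sum_le_sum fun i _ => Finset.sum_le_sum fun j _ => ?_
  rw [proj_apply]
  split
  · exact le_rfl
  · simpa using sq_nonneg (X i j)

lemma finner_split (Ω : Set (Fin n × Fin n)) (G X : Matrix (Fin n) (Fin n) ℝ) :
    finner G X = finner (projSet Ω G) (projSet Ω X)
      + finner (G - projSet Ω G) (X - projSet Ω X) := by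
  rw [finner, finner, finner, ← Finset.sum_add_distrib]
  refine Finset.sum_congr rfl fun i _ => ?_
  rw [← Finset.sum_add_distrib]
  refine Finset.sum_congr rfl fun j _ => ?_
  rw [proj_apply, proj_apply, projc_apply, projc_apply]
  split <;> simp

lemma finner_le_linf_mul_l1 (P Q : Matrix (Fin n) (Fin n) ℝ) :
    finner P Q ≤ linfNorm P * l1Norm Q := by
  rw [finner_prod, l1_prod, Finset.mul_sum]
  refine Finset.sum_le_sum fun p _ => ?_
  calc P p.1 p.2 * Q p.1 p.2 ≤ |P p.1 p.2 * Q p.1 p.2| := le_abs_self _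
    _ = |P p.1 p.2| * |Q p.1 p.2| := abs_mul _ _
    _ ≤ linfNorm P * |Q p.1 p.2| :=
        mul_le_mul_of_nonneg_right (abs_entry_le_linf P p.1 p.2) (abs_nonneg _)

lemma sign_sub_ineq (a d : ℝ) :
    |a| - Real.sign a * d + (if a ≠ 0 then 0 else |d|) ≤ |a - d| := by
  rcases lt_trichotomy a 0 with h | h | h
  · rw [Real.sign_of_neg h, if_pos (ne_of_lt h), abs_of_neg h]
    have : -(a - d) ≤ |a - d| := neg_le_abs _
    linarith
  · subst h
    simp [Real.sign_zero]
  · rw [Real.sign_of_pos h, if_pos (ne_of_gt h), abs_of_pos h]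
    have : a - d ≤ |a - d| := le_abs_self _
    linarith

lemma subgrad_l1 (S D : Matrix (Fin n) (Fin n) ℝ) :
    l1Norm S - finner (sgnMat S) D + l1Norm (D - projSet (suppSet S) D) ≤ l1Norm (S - D) := by
  rw [l1_prod, l1_prod, l1_prod, finner_prod]
  rw [← Finset.sum_sub_distrib, ← Finset.sum_add_distrib]
  refine Finset.sum_le_sum fun p _ => ?_
  have hmem : (p.1, p.2) ∈ suppSet S ↔ S p.1 p.2 ≠ 0 := Iff.rfl
  have h1 : (D - projSet (suppSet S) D) p.1 p.2 = if S p.1 p.2 ≠ 0 then 0 else D p.1 p.2 := by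
    rw [projc_apply]
    by_cases h : S p.1 p.2 ≠ 0
    · rw [if_pos (hmem.mpr h), if_pos h]
    · rw [if_neg (fun hc => h (hmem.mp hc)), if_neg h]
  rw [h1, Matrix.sub_apply]
  have := sign_sub_ineq (S p.1 p.2) (D p.1 p.2)
  have h2 : |(if S p.1 p.2 ≠ 0 then (0:ℝ) else D p.1 p.2)|
      = if S p.1 p.2 ≠ 0 then 0 else |D p.1 p.2| := by
    split <;> simp
  rw [h2]
  exact this


variable {r : ℕ}

lemma finner_UQ_zero (U : Matrix (Fin n) (Fin r) ℝ) (Z : Matrix (Fin n) (Fin n) ℝ)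
    (hUZ : Uᵀ * Z = 0) (Q : Matrix (Fin n) (Fin r) ℝ) : finner Z (U * Qᵀ) = 0 := by
  calc finner Z (U * Qᵀ) = ∑ a, ∑ b, ∑ k, Z a b * (U a k * Q b k) := by
        refine Finset.sum_congr rfl fun a _ => Finset.sum_congr rfl fun b _ => ?_
        rw [Matrix.mul_apply, Finset.mul_sum]
        exact Finset.sum_congr rfl fun k _ => by rw [Matrix.transpose_apply]
    _ = ∑ a, ∑ k, ∑ b, Z a b * (U a k * Q b k) :=
        Finset.sum_congr rfl fun a _ => Finset.sum_comm
    _ = ∑ k, ∑ a, ∑ b, Z a b * (U a k * Q b k) := Finset.sum_comm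
    _ = ∑ k, ∑ b, ∑ a, Z a b * (U a k * Q b k) :=
        Finset.sum_congr rfl fun k _ => Finset.sum_comm
    _ = ∑ k, ∑ b, Q b k * ((Uᵀ * Z) k b) := by
        refine Finset.sum_congr rfl fun k _ => Finset.sum_congr rfl fun b _ => ?_
        rw [Matrix.mul_apply, Finset.mul_sum]
        exact Finset.sum_congr rfl fun a _ => by rw [Matrix.transpose_apply]; ring
    _ = 0 := by rw [hUZ]; simp

lemma finner_RV_zero (V : Matrix (Fin n) (Fin r) ℝ) (Z : Matrix (Fin n) (Fin n) ℝ)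
    (hZV : Z * V = 0) (R : Matrix (Fin n) (Fin r) ℝ) : finner Z (R * Vᵀ) = 0 := by
  calc finner Z (R * Vᵀ) = ∑ a, ∑ b, ∑ k, Z a b * (R a k * V b k) := by
        refine Finset.sum_congr rfl fun a _ => Finset.sum_congr rfl fun b _ => ?_
        rw [Matrix.mul_apply, Finset.mul_sum]
        exact Finset.sum_congr rfl fun k _ => by rw [Matrix.transpose_apply]
    _ = ∑ a, ∑ k, ∑ b, Z a b * (R a k * V b k) :=
        Finset.sum_congr rfl fun a _ => Finset.sum_comm
    _ = ∑ a, ∑ k, R a k * ((Z * V) a k) := by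
        refine Finset.sum_congr rfl fun a _ => Finset.sum_congr rfl fun k _ => ?_
        rw [Matrix.mul_apply, Finset.mul_sum]
        exact Finset.sum_congr rfl fun b _ => by ring
    _ = 0 := by rw [hZV]; simp

lemma finner_T_zero {U V : Matrix (Fin n) (Fin r) ℝ} (Z : Matrix (Fin n) (Fin n) ℝ)
    (hUZ : Uᵀ * Z = 0) (hZV : Z * V = 0) {Y : Matrix (Fin n) (Fin n) ℝ}
    (hY : Y ∈ Tspace U V) : finner Z Y = 0 := by
  obtain ⟨Q, R, rfl⟩ := hY
  rw [finner_add_right, finner_UQ_zero U Z hUZ Q, finner_RV_zero V Z hZV R, add_zero]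

lemma col_ortho {U : Matrix (Fin n) (Fin r) ℝ} (hU : Uᵀ * U = 1) (k l : Fin r) :
    ∑ a, U a k * U a l = if k = l then 1 else 0 := by
  have h := congrFun (congrFun hU k) l
  rw [Matrix.mul_apply, Matrix.one_apply] at h
  rw [← h]
  exact Finset.sum_congr rfl fun a _ => by rw [Matrix.transpose_apply]

lemma combined_spec {U V : Matrix (Fin n) (Fin r) ℝ}
    (hU : Uᵀ * U = 1) (hV : Vᵀ * V = 1) {Z : Matrix (Fin n) (Fin n) ℝ}
    (hZsq : ∀ x : Fin n → ℝ, ∑ a, (Z *ᵥ x) a ^ 2 ≤ ∑ a, x a ^ 2)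
    (hUZ : Uᵀ * Z = 0) (hZV : Z * V = 0) :
    specNorm (U * Vᵀ + Z) ≤ 1 := by
  refine spec_le_of_bound zero_le_one fun x => ?_
  rw [one_mul]
  apply Real.sqrt_le_sqrt
  set y := Vᵀ *ᵥ x with hy
  have hdecomp : (U * Vᵀ + Z) *ᵥ x = (U *ᵥ y) + Z *ᵥ x := by
    rw [Matrix.add_mulVec, ← Matrix.mulVec_mulVec]
  have hcross : (U *ᵥ y) ⬝ᵥ (Z *ᵥ x) = 0 := by
    rw [Matrix.dotProduct_mulVec, ← Matrix.vecMul_transpose, Matrix.vecMul_vecMul, hUZ,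
      Matrix.vecMul_zero, zero_dotProduct]
  have hUyy : (U *ᵥ y) ⬝ᵥ (U *ᵥ y) = y ⬝ᵥ y := by
    rw [Matrix.dotProduct_mulVec, ← Matrix.vecMul_transpose, Matrix.vecMul_vecMul, hU,
      Matrix.vecMul_one]
  set x1 := V *ᵥ y with hx1
  have hZx1 : Z *ᵥ x1 = 0 := by rw [hx1, Matrix.mulVec_mulVec, hZV, Matrix.zero_mulVec]
  have hxx1 : x ⬝ᵥ x1 = y ⬝ᵥ y := by
    rw [hx1, Matrix.dotProduct_mulVec, ← Matrix.mulVec_transpose]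
  have hx1x1 : x1 ⬝ᵥ x1 = y ⬝ᵥ y := by
    rw [hx1, Matrix.dotProduct_mulVec, ← Matrix.vecMul_transpose, Matrix.vecMul_vecMul, hV,
      Matrix.vecMul_one]
  have hZx : Z *ᵥ x = Z *ᵥ (x - x1) := by
    rw [Matrix.mulVec_sub, hZx1, sub_zero]
  have hZbound : (Z *ᵥ (x - x1)) ⬝ᵥ (Z *ᵥ (x - x1)) ≤ (x - x1) ⬝ᵥ (x - x1) := by
    rw [← sq_sum_dot, ← sq_sum_dot]
    exact hZsq _
  have hsub : (x - x1) ⬝ᵥ (x - x1) = x ⬝ᵥ x - y ⬝ᵥ y := by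
    rw [sub_dotProduct, dotProduct_sub, dotProduct_sub]
    have hc := dotProduct_comm x x1
    linarith [hxx1, hx1x1, hc]
  have hcross2 : (Z *ᵥ x) ⬝ᵥ (U *ᵥ y) = 0 := by
    rw [dotProduct_comm]; exact hcross
  have hfin : ((U *ᵥ y) + Z *ᵥ x) ⬝ᵥ ((U *ᵥ y) + Z *ᵥ x)
      = y ⬝ᵥ y + ((Z *ᵥ (x - x1)) ⬝ᵥ (Z *ᵥ (x - x1))) := by
    rw [add_dotProduct, dotProduct_add, dotProduct_add, hUyy, hcross,
      hcross2, hZx]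
    ring
  rw [sq_sum_dot, sq_sum_dot, hdecomp, hfin]
  linarith

lemma L0_apply (U V : Matrix (Fin n) (Fin r) ℝ) (σ : Fin r → ℝ) (a b : Fin n) :
    (U * Matrix.diagonal σ * Vᵀ) a b = ∑ k, σ k * (U a k * V b k) := by
  rw [Matrix.mul_apply]
  refine Finset.sum_congr rfl fun l _ => ?_
  rw [Matrix.mul_diagonal, Matrix.transpose_apply]
  ring

lemma finner_UV_L0 {U V : Matrix (Fin n) (Fin r) ℝ} (hU : Uᵀ * U = 1) (hV : Vᵀ * V = 1)
    (σ : Fin r → ℝ) : finner (U * Vᵀ) (U * Matrix.diagonal σ * Vᵀ) = ∑ k, σ k := by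
  calc finner (U * Vᵀ) (U * Matrix.diagonal σ * Vᵀ)
      = ∑ a, ∑ b, ∑ k, ∑ l, σ l * ((U a k * U a l) * (V b k * V b l)) := by
        refine Finset.sum_congr rfl fun a _ => Finset.sum_congr rfl fun b _ => ?_
        rw [L0_apply, Matrix.mul_apply, Finset.sum_mul_sum]
        refine Finset.sum_congr rfl fun k _ => Finset.sum_congr rfl fun l _ => ?_
        rw [Matrix.transpose_apply]
        ring
    _ = ∑ a, ∑ k, ∑ b, ∑ l, σ l * ((U a k * U a l) * (V b k * V b l)) :=
        Finset.sum_congr rfl fun a _ => Finset.sum_comm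
    _ = ∑ k, ∑ a, ∑ b, ∑ l, σ l * ((U a k * U a l) * (V b k * V b l)) := Finset.sum_comm
    _ = ∑ k, ∑ a, ∑ l, ∑ b, σ l * ((U a k * U a l) * (V b k * V b l)) :=
        Finset.sum_congr rfl fun k _ => Finset.sum_congr rfl fun a _ => Finset.sum_comm
    _ = ∑ k, ∑ l, ∑ a, ∑ b, σ l * ((U a k * U a l) * (V b k * V b l)) :=
        Finset.sum_congr rfl fun k _ => Finset.sum_comm
    _ = ∑ k, ∑ l, σ l * ((∑ a, U a k * U a l) * (∑ b, V b k * V b l)) := by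
        refine Finset.sum_congr rfl fun k _ => Finset.sum_congr rfl fun l _ => ?_
        rw [Finset.sum_mul_sum, Finset.mul_sum]
        refine Finset.sum_congr rfl fun a _ => ?_
        rw [Finset.mul_sum]
    _ = ∑ k, σ k := by
        refine Finset.sum_congr rfl fun k _ => ?_
        rw [Finset.sum_eq_single k ?_ ?_]
        · rw [col_ortho hU, col_ortho hV, if_pos rfl]; ring
        · intro l _ hl
          rw [col_ortho hU, col_ortho hV, if_neg (Ne.symm hl)]; ring
        · intro h; exact absurd (Finset.mem_univ k) h

lemma nuclear_L0_le {U V : Matrix (Fin n) (Fin r) ℝ} (hU : Uᵀ * U = 1) (hV : Vᵀ * V = 1)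
    {σ : Fin r → ℝ} (hσ : ∀ k, 0 ≤ σ k) :
    nuclearNorm (U * Matrix.diagonal σ * Vᵀ) ≤ ∑ k, σ k := by
  obtain ⟨Z, hZ1, hZ2, -, -⟩ := dual_exists (U * Matrix.diagonal σ * Vᵀ)
  rw [← hZ1]
  have hexp : finner Z (U * Matrix.diagonal σ * Vᵀ)
      = ∑ k, σ k * ((fun a => U a k) ⬝ᵥ (Z *ᵥ (fun b => V b k))) := by
    calc finner Z (U * Matrix.diagonal σ * Vᵀ)
        = ∑ a, ∑ b, ∑ k, σ k * (U a k * (Z a b * V b k)) := by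
          refine Finset.sum_congr rfl fun a _ => Finset.sum_congr rfl fun b _ => ?_
          rw [L0_apply, Finset.mul_sum]
          exact Finset.sum_congr rfl fun k _ => by ring
      _ = ∑ a, ∑ k, ∑ b, σ k * (U a k * (Z a b * V b k)) :=
          Finset.sum_congr rfl fun a _ => Finset.sum_comm
      _ = ∑ k, ∑ a, ∑ b, σ k * (U a k * (Z a b * V b k)) := Finset.sum_comm
      _ = ∑ k, σ k * ((fun a => U a k) ⬝ᵥ (Z *ᵥ (fun b => V b k))) := by
          refine Finset.sum_congr rfl fun k _ => ?_
          rw [dot_eq, Finset.mul_sum]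
          refine Finset.sum_congr rfl fun a _ => ?_
          rw [mulVec_apply', Finset.mul_sum, Finset.mul_sum]
  rw [hexp]
  refine Finset.sum_le_sum fun k _ => ?_
  have hdot : (fun a => U a k) ⬝ᵥ (Z *ᵥ (fun b => V b k)) ≤ 1 := by
    have hcs : (fun a => U a k) ⬝ᵥ (Z *ᵥ (fun b => V b k))
        ≤ Real.sqrt (∑ a, U a k ^ 2) * Real.sqrt (∑ a, (Z *ᵥ (fun b => V b k)) a ^ 2) := by
      rw [dot_eq]
      exact Real.sum_mul_le_sqrt_mul_sqrt _ _ _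
    have hUk : ∑ a, U a k ^ 2 = 1 := by
      have := col_ortho hU k k
      rw [if_pos rfl] at this
      rw [← this]
      exact Finset.sum_congr rfl fun a _ => pow_two _
    have hVk : ∑ b, V b k ^ 2 = 1 := by
      have := col_ortho hV k k
      rw [if_pos rfl] at this
      rw [← this]
      exact Finset.sum_congr rfl fun b _ => pow_two _
    have hZV : Real.sqrt (∑ a, (Z *ᵥ (fun b => V b k)) a ^ 2) ≤ 1 := by
      have h2 := Real.sqrt_le_sqrt (hZ2 (fun b => V b k))
      rwa [hVk, Real.sqrt_one] at h2
    rw [hUk, Real.sqrt_one, one_mul] at hcs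
    exact hcs.trans hZV
  calc σ k * ((fun a => U a k) ⬝ᵥ (Z *ᵥ (fun b => V b k))) ≤ σ k * 1 :=
        mul_le_mul_of_nonneg_left hdot (hσ k)
    _ = σ k := mul_one _


lemma l1_sub_le (A B : Matrix (Fin n) (Fin n) ℝ) :
    l1Norm (A - B) ≤ l1Norm A + l1Norm B := by
  have := l1_triangle A (-B)
  rwa [l1_neg, ← sub_eq_add_neg] at this

lemma PT_left {U V : Matrix (Fin n) (Fin r) ℝ}
    {PT : Matrix (Fin n) (Fin n) ℝ →ₗ[ℝ] Matrix (Fin n) (Fin n) ℝ}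
    (hPT : IsOrthProjOnto PT (Tspace U V)) (X : Matrix (Fin n) (Fin n) ℝ) :
    Uᵀ * (X - PT X) = 0 := by
  ext k b
  rw [Matrix.zero_apply, Matrix.mul_apply]
  have hY : U * (Matrix.single b k (1:ℝ))ᵀ ∈ Tspace U V :=
    ⟨Matrix.single b k 1, 0, by rw [Matrix.zero_mul, add_zero]⟩
  have h := hPT.2.2 X _ hY
  rw [finner] at h
  have hcol : ∀ a b', (U * (Matrix.single b k (1:ℝ))ᵀ) a b'
      = if b' = b then U a k else 0 := by
    intro a b'
    rw [Matrix.mul_apply]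
    by_cases hb : b' = b
    · subst hb
      rw [Finset.sum_eq_single k ?_ ?_]
      · rw [if_pos rfl, Matrix.transpose_apply, Matrix.single, Matrix.of_apply,
          if_pos ⟨rfl, rfl⟩, mul_one]
      · intro l _ hl
        rw [Matrix.transpose_apply, Matrix.single, Matrix.of_apply,
          if_neg (fun hc => hl hc.2.symm), mul_zero]
      · intro hmem; exact absurd (Finset.mem_univ k) hmem
    · rw [if_neg hb]
      refine Finset.sum_eq_zero fun l _ => ?_
      rw [Matrix.transpose_apply, Matrix.single, Matrix.of_apply,
        if_neg (fun hc => hb hc.1.symm), mul_zero]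
  have h2 : ∀ a : Fin n, ∑ b', (X - PT X) a b' * (U * (Matrix.single b k (1:ℝ))ᵀ) a b'
      = (X - PT X) a b * U a k := by
    intro a
    rw [Finset.sum_eq_single b ?_ ?_]
    · rw [hcol, if_pos rfl]
    · intro b' _ hb'
      rw [hcol, if_neg hb', mul_zero]
    · intro hmem; exact absurd (Finset.mem_univ b) hmem
  rw [Finset.sum_congr rfl (fun a _ => h2 a)] at h
  rw [← h]
  exact Finset.sum_congr rfl fun a _ => by rw [Matrix.transpose_apply]; ring

lemma PT_right {U V : Matrix (Fin n) (Fin r) ℝ}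
    {PT : Matrix (Fin n) (Fin n) ℝ →ₗ[ℝ] Matrix (Fin n) (Fin n) ℝ}
    (hPT : IsOrthProjOnto PT (Tspace U V)) (X : Matrix (Fin n) (Fin n) ℝ) :
    (X - PT X) * V = 0 := by
  ext a k
  rw [Matrix.zero_apply, Matrix.mul_apply]
  have hY : (Matrix.single a k (1:ℝ)) * Vᵀ ∈ Tspace U V :=
    ⟨0, Matrix.single a k 1, by rw [Matrix.transpose_zero, Matrix.mul_zero, zero_add]⟩
  have h := hPT.2.2 X _ hY
  rw [finner] at h
  have hrow : ∀ a' b, ((Matrix.single a k (1:ℝ)) * Vᵀ) a' b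
      = if a' = a then V b k else 0 := by
    intro a' b
    rw [Matrix.mul_apply]
    by_cases ha : a' = a
    · subst ha
      rw [Finset.sum_eq_single k ?_ ?_]
      · rw [if_pos rfl, Matrix.transpose_apply, Matrix.single, Matrix.of_apply,
          if_pos ⟨rfl, rfl⟩, one_mul]
      · intro l _ hl
        rw [Matrix.single, Matrix.of_apply,
          if_neg (fun hc => hl hc.2.symm), zero_mul]
      · intro hmem; exact absurd (Finset.mem_univ k) hmem
    · rw [if_neg ha]
      refine Finset.sum_eq_zero fun l _ => ?_
      rw [Matrix.single, Matrix.of_apply, if_neg (fun hc => ha hc.1.symm), zero_mul]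
  have h2 : ∀ a' : Fin n, ∑ b, (X - PT X) a' b * ((Matrix.single a k (1:ℝ)) * Vᵀ) a' b
      = if a' = a then ∑ b, (X - PT X) a b * V b k else 0 := by
    intro a'
    by_cases ha : a' = a
    · subst ha
      rw [if_pos rfl]
      exact Finset.sum_congr rfl fun b _ => by rw [hrow, if_pos rfl]
    · rw [if_neg ha]
      refine Finset.sum_eq_zero fun b _ => by rw [hrow, if_neg ha, mul_zero]
  rw [Finset.sum_congr rfl (fun a' _ => h2 a')] at h
  rw [Finset.sum_ite_eq' Finset.univ a _] at h
  rw [if_pos (Finset.mem_univ a)] at h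
  rw [← h]

end RPCA

open RPCA in
/-- Under ‖P_Ω P_T‖ ≤ 1/2, λ ≤ 1/2 and a dual certificate W, any pair H = (H_L, H_S) with
‖X₀ + H‖_♦ ≤ ‖X₀‖_♦ satisfies
‖P_{T⊥}(H^{Γ⊥}_L)‖_* + λ‖P_{Ω⊥}(H^{Γ⊥}_S)‖₁ ≤ 4‖H^Γ‖_♦. -/
theorem stmt7 {n r : ℕ} (L0 S0 : Matrix (Fin n) (Fin n) ℝ)
    (U V : Matrix (Fin n) (Fin r) ℝ) (σ : Fin r → ℝ)
    -- compact SVD of L₀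
    (hU : Uᵀ * U = 1) (hV : Vᵀ * V = 1) (hσ : ∀ i, 0 < σ i)
    (hSVD : L0 = U * Matrix.diagonal σ * Vᵀ) (hrank : L0.rank = r)
    -- P_T is the orthogonal projection onto T
    (PT : Matrix (Fin n) (Fin n) ℝ →ₗ[ℝ] Matrix (Fin n) (Fin n) ℝ)
    (hPT : IsOrthProjOnto PT (Tspace U V))
    (lam : ℝ) (hlam : lam ≤ 1 / 2)
    -- ‖P_Ω P_T‖ ≤ 1/2
    (hop : ∀ X : Matrix (Fin n) (Fin n) ℝ,
      frobNorm (projSet (suppSet S0) (PT X)) ≤ (1 / 2) * frobNorm X)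
    -- the dual certificate W
    (W : Matrix (Fin n) (Fin n) ℝ)
    (hW1 : PT W = 0) (hW2 : specNorm W < 1 / 2)
    (hW3 : frobNorm (projSet (suppSet S0) (U * Vᵀ - lam • sgnMat S0 + W)) ≤ lam / 4)
    (hW4 : linfNorm ((U * Vᵀ + W) - projSet (suppSet S0) (U * Vᵀ + W)) < lam / 2)
    -- the pair H = (H_L, H_S) with ‖X₀ + H‖_♦ ≤ ‖X₀‖_♦
    (HL HS : Matrix (Fin n) (Fin n) ℝ)
    (hH : nuclearNorm (L0 + HL) + lam * l1Norm (S0 + HS) ≤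
      nuclearNorm L0 + lam * l1Norm S0)
    -- H^Γ = P_Γ(H), H^{Γ⊥} = H − H^Γ
    (HΓ HΓp : Matrix (Fin n) (Fin n) ℝ × Matrix (Fin n) (Fin n) ℝ)
    (hHΓ : HΓ = projGamma (HL, HS)) (hHΓp : HΓp = (HL, HS) - HΓ) :
    nuclearNorm (HΓp.1 - PT HΓp.1) + lam * l1Norm (HΓp.2 - projSet (suppSet S0) HΓp.2) ≤
      4 * (nuclearNorm HΓ.1 + lam * l1Norm HΓ.2) := by
  classical
  have hlam0 : 0 < lam := by
    have h0 := linf_nonneg ((U * Vᵀ + W) - projSet (suppSet S0) (U * Vᵀ + W))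
    linarith
  obtain ⟨hPTmem, hPTid, hPTorth⟩ := hPT
  have hΓ1 : HΓ.1 = (1/2 : ℝ) • (HL + HS) := by rw [hHΓ]; rfl
  have hΓ2 : HΓ.2 = HΓ.1 := by rw [hHΓ]; rfl
  have hp1 : HΓp.1 = HL - HΓ.1 := by rw [hHΓp, Prod.fst_sub]
  have hp2 : HΓp.2 = HS - HΓ.1 := by rw [hHΓp, Prod.snd_sub, hΓ2]
  have hp2' : HΓp.2 = - HΓp.1 := by
    rw [hp1, hp2, hΓ1]
    ext i j
    simp only [Matrix.sub_apply, Matrix.neg_apply, Matrix.smul_apply, Matrix.add_apply,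
      smul_eq_mul]
    ring
  have hHL : HL = HΓ.1 + HΓp.1 := by rw [hp1]; abel
  have hHS : HS = HΓ.1 - HΓp.1 := by
    rw [hp1, hΓ1]
    ext i j
    simp only [Matrix.sub_apply, Matrix.smul_apply, Matrix.add_apply, smul_eq_mul]
    ring
  set D := HΓp.1 with hD
  set Mg := HΓ.1 with hMg
  -- T space facts
  have hUD' : Uᵀ * (D - PT D) = 0 := PT_left ⟨hPTmem, hPTid, hPTorth⟩ D
  have hD'V : (D - PT D) * V = 0 := PT_right ⟨hPTmem, hPTid, hPTorth⟩ D
  obtain ⟨Z0, hZ0a, hZ0b, hZ0c, hZ0d⟩ := dual_exists (D - PT D)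
  have hUZ0 : Uᵀ * Z0 = 0 := by
    ext k b
    have hu : (fun a => U a k) ᵥ* (D - PT D) = 0 := by
      funext b'
      have h := congrFun (congrFun hUD' k) b'
      rw [Matrix.mul_apply] at h
      exact h
    have h2 := congrFun (hZ0c _ hu) b
    rw [Matrix.mul_apply, Matrix.zero_apply]
    exact h2
  have hZ0V : Z0 * V = 0 := by
    ext a k
    have hv : (D - PT D) *ᵥ (fun b => V b k) = 0 := by
      funext a'
      have h := congrFun (congrFun hD'V a') k
      rw [Matrix.mul_apply] at h
      exact h
    have h2 := congrFun (hZ0d _ hv) a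
    rw [Matrix.mul_apply, Matrix.zero_apply]
    exact h2
  have hspec1 : specNorm (U * Vᵀ + Z0) ≤ 1 := combined_spec hU hV hZ0b hUZ0 hZ0V
  have hL0T : L0 ∈ Tspace U V :=
    ⟨V * Matrix.diagonal σ, 0, by
      rw [hSVD, Matrix.transpose_mul, Matrix.diagonal_transpose, Matrix.zero_mul, add_zero,
        Matrix.mul_assoc]⟩
  have hsplitD : D = PT D + (D - PT D) := by abel
  -- nuclear lower bound
  have hlow : nuclearNorm L0 + finner (U * Vᵀ) D + nuclearNorm (D - PT D)
      ≤ nuclearNorm (L0 + D) := by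
    have h1 : finner (U * Vᵀ + Z0) (L0 + D) ≤ nuclearNorm (L0 + D) :=
      finner_le_nuclear _ _ hspec1
    have h2 : finner (U * Vᵀ + Z0) (L0 + D)
        = finner (U * Vᵀ) L0 + finner (U * Vᵀ) D + (finner Z0 L0 + finner Z0 D) := by
      rw [finner_add_left, finner_add_right, finner_add_right]
    have h3 : finner (U * Vᵀ) L0 = ∑ k, σ k := by
      rw [hSVD]; exact finner_UV_L0 hU hV σ
    have h4 : finner Z0 L0 = 0 := finner_T_zero Z0 hUZ0 hZ0V hL0T
    have h5 : finner Z0 D = nuclearNorm (D - PT D) := by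
      conv_lhs => rw [hsplitD]
      rw [finner_add_right, finner_T_zero Z0 hUZ0 hZ0V (hPTmem D), hZ0a, zero_add]
    have h6 : nuclearNorm L0 ≤ ∑ k, σ k := by
      rw [hSVD]; exact nuclear_L0_le hU hV (fun k => (hσ k).le)
    rw [h2, h3, h4, h5] at h1
    linarith
  have hl1low := subgrad_l1 S0 D
  have h3a : nuclearNorm (L0 + D) ≤ nuclearNorm (L0 + HL) + nuclearNorm Mg := by
    have he : L0 + D = (L0 + HL) - Mg := by rw [hHL]; abel
    rw [he]; exact nuclear_sub_le _ _
  have h3b : l1Norm (S0 - D) ≤ l1Norm (S0 + HS) + l1Norm Mg := by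
    have he : S0 - D = (S0 + HS) - Mg := by rw [hHS]; abel
    rw [he]; exact l1_sub_le _ _
  have hmul2 : lam * l1Norm S0 - lam * finner (sgnMat S0) D
      + lam * l1Norm (D - projSet (suppSet S0) D) ≤ lam * l1Norm (S0 - D) := by
    calc lam * l1Norm S0 - lam * finner (sgnMat S0) D
        + lam * l1Norm (D - projSet (suppSet S0) D)
        = lam * (l1Norm S0 - finner (sgnMat S0) D
            + l1Norm (D - projSet (suppSet S0) D)) := by ring
      _ ≤ lam * l1Norm (S0 - D) := mul_le_mul_of_nonneg_left hl1low hlam0.le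
  have hmul3 : lam * l1Norm (S0 - D) ≤ lam * l1Norm (S0 + HS) + lam * l1Norm Mg := by
    calc lam * l1Norm (S0 - D) ≤ lam * (l1Norm (S0 + HS) + l1Norm Mg) :=
          mul_le_mul_of_nonneg_left h3b hlam0.le
      _ = lam * l1Norm (S0 + HS) + lam * l1Norm Mg := by ring
  have hfs : finner (U * Vᵀ - lam • sgnMat S0) D
      = finner (U * Vᵀ) D - lam * finner (sgnMat S0) D := by
    rw [finner_sub_left, finner_smul_left]
  have hKey : nuclearNorm (D - PT D) + lam * l1Norm (D - projSet (suppSet S0) D)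
      ≤ (nuclearNorm Mg + lam * l1Norm Mg) - finner (U * Vᵀ - lam • sgnMat S0) D := by
    rw [hfs]
    linarith
  -- W bounds
  have hWT : finner W (PT D) = 0 := by
    have h := hPTorth W (PT D) (hPTmem D)
    rwa [hW1, sub_zero] at h
  have hWD : finner W D = finner W (D - PT D) := by
    conv_lhs => rw [hsplitD]
    rw [finner_add_right, hWT, zero_add]
  have hWb1 : finner W (D - PT D) ≤ (1/2) * nuclearNorm (D - PT D) := by
    have h := finner_le_spec_mul_nuclear W (D - PT D)
    have h2 := mul_le_mul_of_nonneg_right hW2.le (nuclear_nonneg (D - PT D))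
    linarith
  -- Omega bounds
  set G0 := U * Vᵀ - lam • sgnMat S0 + W with hG0
  have hsplitΩ := finner_split (suppSet S0) G0 D
  have hΩ1' : -((lam/4) * frobNorm (projSet (suppSet S0) D))
      ≤ finner (projSet (suppSet S0) G0) (projSet (suppSet S0) D) := by
    have h := finner_le_frob_mul (-(projSet (suppSet S0) G0)) (projSet (suppSet S0) D)
    rw [finner_neg_left, frob_neg] at h
    have h2 := mul_le_mul_of_nonneg_right hW3 (frobNorm_nonneg (projSet (suppSet S0) D))
    linarith
  have hoff : G0 - projSet (suppSet S0) G0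
      = (U * Vᵀ + W) - projSet (suppSet S0) (U * Vᵀ + W) := by
    ext i j
    rw [projc_apply, projc_apply]
    split
    · rfl
    · rename_i hmem
      have hS : S0 i j = 0 := not_not.mp hmem
      rw [hG0]
      simp only [Matrix.add_apply, Matrix.sub_apply, Matrix.smul_apply, smul_eq_mul]
      rw [show sgnMat S0 i j = Real.sign (S0 i j) from rfl, hS, Real.sign_zero]
      ring
  have hΩ2' : -((lam/2) * l1Norm (D - projSet (suppSet S0) D))
      ≤ finner (G0 - projSet (suppSet S0) G0) (D - projSet (suppSet S0) D) := by
    have hlinfG0 : linfNorm (G0 - projSet (suppSet S0) G0) < lam / 2 := by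
      rw [hoff]; exact hW4
    have h := finner_le_linf_mul_l1 (-(G0 - projSet (suppSet S0) G0))
      (D - projSet (suppSet S0) D)
    rw [finner_neg_left, linf_neg] at h
    have h2 := mul_le_mul_of_nonneg_right hlinfG0.le (l1_nonneg (D - projSet (suppSet S0) D))
    linarith
  -- frobenius chain
  have h7a : frobNorm (projSet (suppSet S0) D)
      ≤ l1Norm (D - projSet (suppSet S0) D) + 2 * nuclearNorm (D - PT D) := by
    have e1 : projSet (suppSet S0) D
        = projSet (suppSet S0) (PT D) + projSet (suppSet S0) (D - PT D) := by
      rw [← proj_add, ← hsplitD]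
    have e2 : frobNorm (projSet (suppSet S0) D) ≤ frobNorm (projSet (suppSet S0) (PT D))
        + frobNorm (projSet (suppSet S0) (D - PT D)) := by
      rw [e1]; exact frob_triangle _ _
    have e3 := hop D
    have e4 : frobNorm (projSet (suppSet S0) (D - PT D)) ≤ nuclearNorm (D - PT D) :=
      (frob_proj_le _ _).trans (frob_le_nuclear _)
    have e5 : frobNorm D ≤ frobNorm (projSet (suppSet S0) D)
        + frobNorm (D - projSet (suppSet S0) D) := by
      have heq : D = projSet (suppSet S0) D + (D - projSet (suppSet S0) D) := by abel
      nth_rewrite 1 [heq]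
      exact frob_triangle _ _
    have e6 : frobNorm (D - projSet (suppSet S0) D)
        ≤ l1Norm (D - projSet (suppSet S0) D) := frob_le_l1 _
    linarith
  -- rewrite the goal
  have hgoal2 : l1Norm (HΓp.2 - projSet (suppSet S0) HΓp.2)
      = l1Norm (D - projSet (suppSet S0) D) := by
    rw [hp2', proj_neg]
    rw [show -D - -projSet (suppSet S0) D = -(D - projSet (suppSet S0) D) by abel]
    exact l1_neg _
  rw [hgoal2, hΓ2]
  -- final arithmetic
  have hG0split : finner G0 D = finner (U * Vᵀ - lam • sgnMat S0) D + finner W D := by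
    rw [hG0, finner_add_left]
  have hf := mul_le_mul_of_nonneg_left h7a hlam0.le
  have hf' : lam * frobNorm (projSet (suppSet S0) D)
      ≤ lam * l1Norm (D - projSet (suppSet S0) D) + 2 * (lam * nuclearNorm (D - PT D)) := by
    calc lam * frobNorm (projSet (suppSet S0) D)
        ≤ lam * (l1Norm (D - projSet (suppSet S0) D) + 2 * nuclearNorm (D - PT D)) := hf
      _ = lam * l1Norm (D - projSet (suppSet S0) D)
          + 2 * (lam * nuclearNorm (D - PT D)) := by ring
  have hν : lam * nuclearNorm (D - PT D) ≤ (1/2) * nuclearNorm (D - PT D) :=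
    mul_le_mul_of_nonneg_right hlam (nuclear_nonneg _)
  have hr1 : (lam/4) * frobNorm (projSet (suppSet S0) D)
      = (1/4) * (lam * frobNorm (projSet (suppSet S0) D)) := by ring
  have hr2 : (lam/2) * l1Norm (D - projSet (suppSet S0) D)
      = (1/2) * (lam * l1Norm (D - projSet (suppSet S0) D)) := by ring
  linarith
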